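/- Under the same hypotheses (H satisfies H(p²n) + χ_p(n)H(n) + p·H(n/p²) = (p+1)H(n) for all n), define G̃(n) = H(n) − (1/p)χ_p(n)H(n) − H(n/p²). Then G̃(p²n) = p·G̃(n) for all n. -/

import Mathlib

/-- The series coefficients `G̃(n) = H(n) − (1/p)χ_p(n)H(n) − H(n/p²)`, where
`χ_p(n) = (-n/p)` is the Legendre symbol and `H(n/p²)` is interpreted as `0`
when `p² ∤ n`. -/
noncomputable def Gtilde (p : ℕ) [Fact p.Prime] (H : ℕ → ℚ) (n : ℕ) : ℚ :=
  H n - (1 / (p : ℚ)) * (legendreSym p (-(n : ℤ)) : ℚ) * H n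
    - (if p ^ 2 ∣ n then H (n / p ^ 2) else 0)

/-- If `H : ℕ → ℚ` satisfies the Hecke eigenvalue relation
`H(p²n) + χ_p(n)H(n) + p·H(n/p²) = (p+1)H(n)` for an odd prime `p`, then
`G̃(p²n) = p·G̃(n)` for all `n`. -/
theorem Gtilde_U_sq_eq_p_smul (p : ℕ) [Fact p.Prime] (hodd : p ≠ 2) (H : ℕ → ℚ)
    (hH : ∀ n : ℕ,
      H (p ^ 2 * n) + (legendreSym p (-(n : ℤ)) : ℚ) * H n
          + p * (if p ^ 2 ∣ n then H (n / p ^ 2) else 0) = (p + 1) * H n) :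
    ∀ n : ℕ, Gtilde p H (p ^ 2 * n) = p * Gtilde p H n := by
  intro n
  have hchi : legendreSym p (-((p ^ 2 * n : ℕ) : ℤ)) = 0 := by
    rw [legendreSym.eq_zero_iff]
    push_cast
    simp [ZMod.natCast_self]
  have hdvd : p ^ 2 ∣ p ^ 2 * n := Dvd.intro n rfl
  have hdiv : p ^ 2 * n / p ^ 2 = n :=
    Nat.mul_div_cancel_left n (pow_pos (Fact.out (p := p.Prime)).pos 2)
  have h := hH n
  simp only [Gtilde, hchi, if_pos hdvd, hdiv, Int.cast_zero]
  have hp : (p : ℚ) ≠ 0 := Nat.cast_ne_zero.mpr (Fact.out (p := p.Prime)).ne_zero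
  field_simp
  simp only [mul_ite, mul_zero] at h
  simp only [mul_ite, mul_zero]
  linear_combination (p : ℚ) * h
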